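/- Let c₁,…,c_n ∈ ℝⁿ and d₁,…,d_m ∈ ℝ^m. Let Ũ be the mn×mn block-diagonal matrix with blocks Ũ^(1),…,Ũ^(m), where each Ũ^(k) ∈ ℝ^{n×n} is symmetric with zero diagonal. Define ℍ₀^(k) = Σ_{i≠j} Ũ^(k)_{ij} c_i c_jᵀ, and for w ∈ ℝ^{mn} let 𝔻₀(w) be the mn×mn block-diagonal matrix whose k-th n×n block has entries 𝔻₀^(k)_{ij}(w) = wᵀ((c_i c_jᵀ) ⊗ (d_k d_kᵀ))w. Then ‖Σ_{k=1}^m ℍ₀^(k) ⊗ d_k d_kᵀ‖₂ = sup_{w ∈ S^{mn−1}} |⟨Ũ, 𝔻₀(w)⟩| ≤ ‖Ũ‖₂ · sup_{w ∈ S^{mn−1}} ‖𝔻₀(w)‖_*. -/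

import Mathlib

open MeasureTheory Matrix Finset
open scoped Kronecker

/-- Euclidean (ℓ₂) norm of a vector. -/
noncomputable def e2 {ι : Type*} [Fintype ι] (v : ι → ℝ) : ℝ :=
  Real.sqrt (∑ i, v i ^ 2)

/-- Operator (spectral) norm of a matrix. -/
noncomputable def opNorm {α β : Type*} [Fintype α] [Fintype β]
    (M : Matrix α β ℝ) : ℝ :=
  sSup {r | ∃ q : β → ℝ, e2 q ≤ 1 ∧ r = e2 (M.mulVec q)}

/-- Nuclear (trace) norm of a real square matrix: `‖M‖_* = tr √(MᵀM)`. -/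
noncomputable def nucNorm {ι : Type*} [Fintype ι] [DecidableEq ι]
    (M : Matrix ι ι ℝ) : ℝ :=
  ((Matrix.posSemidef_conjTranspose_mul_self M).1.eigenvectorUnitary.1 *
    Matrix.diagonal ((RCLike.ofReal : ℝ → ℝ) ∘ (Real.sqrt ·) ∘ (Matrix.posSemidef_conjTranspose_mul_self M).1.eigenvalues) *
    (star (Matrix.posSemidef_conjTranspose_mul_self M).1.eigenvectorUnitary : Matrix ι ι ℝ)).trace

/-- Trace inner product `⟨M, N⟩ = tr(MᵀN) = Σ M_{xy} N_{xy}` of real matrices. -/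
noncomputable def matInner {α β : Type*} [Fintype α] [Fintype β]
    (M N : Matrix α β ℝ) : ℝ :=
  ∑ x, ∑ y, M x y * N x y

/-- The block-diagonal matrix `𝔻₀(w)` with `k`-th block
`(wᵀ((c_i c_jᵀ) ⊗ (d_k d_kᵀ))w)_{ij}`. -/
noncomputable def D0 {n m : ℕ} (c : Fin n → Fin n → ℝ) (d : Fin m → Fin m → ℝ)
    (w : Fin n × Fin m → ℝ) :
    Matrix (Fin n × Fin m) (Fin n × Fin m) ℝ :=
  Matrix.blockDiagonal fun k => Matrix.of fun i j =>
    w ⬝ᵥ ((Matrix.vecMulVec (c i) (c j) ⊗ₖ Matrix.vecMulVec (d k) (d k)).mulVec w)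

set_option linter.unusedSectionVars false

section ChaosAux
open scoped RealInnerProductSpace

variable {ι κ : Type*} [Fintype ι] [DecidableEq ι] [Fintype κ] [DecidableEq κ]

lemma e2_eq_norm (v : ι → ℝ) : e2 v = ‖(WithLp.equiv 2 (ι → ℝ)).symm v‖ := by
  rw [EuclideanSpace.norm_eq, e2]
  congr 1
  refine Finset.sum_congr rfl fun i _ => ?_
  rw [Real.norm_eq_abs, sq_abs]; rfl

lemma sum_sq_eq_one_of_e2 {v : ι → ℝ} (h : e2 v = 1) : ∑ i, v i ^ 2 = 1 := by
  rw [e2, Real.sqrt_eq_one] at h; exact h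

lemma clm_apply (M : Matrix ι ι ℝ) (v : ι → ℝ) :
    Matrix.toEuclideanCLM (𝕜 := ℝ) M ((WithLp.equiv 2 (ι → ℝ)).symm v) =
      (WithLp.equiv 2 (ι → ℝ)).symm (M.mulVec v) := by
  rw [WithLp.equiv_symm_apply, Matrix.toEuclideanCLM_toLp]

lemma opNorm_eq (M : Matrix ι ι ℝ) : opNorm M = ‖Matrix.toEuclideanCLM (𝕜 := ℝ) M‖ := by
  rw [← ContinuousLinearMap.sSup_unitClosedBall_eq_norm]
  unfold opNorm
  congr 1
  ext r
  constructor
  · rintro ⟨q, hq, rfl⟩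
    refine ⟨(WithLp.equiv 2 (ι → ℝ)).symm q, ?_, ?_⟩
    · rw [Metric.mem_closedBall, dist_zero_right, ← e2_eq_norm]; exact hq
    · show ‖Matrix.toEuclideanCLM (𝕜 := ℝ) M ((WithLp.equiv 2 (ι → ℝ)).symm q)‖ = _
      rw [clm_apply, ← e2_eq_norm]
  · rintro ⟨x, hx, rfl⟩
    refine ⟨WithLp.equiv 2 (ι → ℝ) x, ?_, ?_⟩
    · rw [← (WithLp.equiv 2 (ι → ℝ)).symm_apply_apply x] at hx
      rw [Metric.mem_closedBall, dist_zero_right] at hx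
      rw [e2_eq_norm, (WithLp.equiv 2 (ι → ℝ)).symm_apply_apply]; exact hx
    · show ‖Matrix.toEuclideanCLM (𝕜 := ℝ) M x‖ = e2 _
      rw [e2_eq_norm, ← clm_apply, (WithLp.equiv 2 (ι → ℝ)).symm_apply_apply]

lemma opNorm_nonneg' (M : Matrix ι ι ℝ) : 0 ≤ opNorm M := by
  rw [opNorm_eq]; exact norm_nonneg _

lemma inner_symm_dot (M : Matrix ι ι ℝ) (v u : ι → ℝ) :
    ⟪Matrix.toEuclideanCLM (𝕜 := ℝ) M ((WithLp.equiv 2 (ι → ℝ)).symm v),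
      (WithLp.equiv 2 (ι → ℝ)).symm u⟫ = M.mulVec v ⬝ᵥ u := by
  rw [clm_apply]
  simp [PiLp.inner_apply, RCLike.inner_apply, dotProduct]
  exact Finset.sum_congr rfl fun i _ => mul_comm _ _

lemma norm_symm_sq (v : ι → ℝ) : ‖(WithLp.equiv 2 (ι → ℝ)).symm v‖ ^ 2 = ∑ i, v i ^ 2 := by
  rw [← e2_eq_norm, e2, Real.sq_sqrt (by positivity)]

lemma quad_bound (M : Matrix ι ι ℝ) (v : ι → ℝ) :
    |v ⬝ᵥ M.mulVec v| ≤ opNorm M * ∑ i, v i ^ 2 := by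
  set T := Matrix.toEuclideanCLM (𝕜 := ℝ) M
  set x := (WithLp.equiv 2 (ι → ℝ)).symm v
  have h1 : v ⬝ᵥ M.mulVec v = ⟪T x, x⟫ := by
    rw [inner_symm_dot, dotProduct_comm]
  rw [h1, opNorm_eq, ← norm_symm_sq v]
  calc |⟪T x, x⟫| ≤ ‖T x‖ * ‖x‖ := abs_real_inner_le_norm _ _
    _ ≤ (‖T‖ * ‖x‖) * ‖x‖ :=
        mul_le_mul_of_nonneg_right (T.le_opNorm x) (norm_nonneg x)
    _ = ‖T‖ * ‖x‖ ^ 2 := by ring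

lemma sa_norm_eq_sSup {F : Type*} [NormedAddCommGroup F] [InnerProductSpace ℝ F] [Nontrivial F]
    (T : F →L[ℝ] F) (hT : ∀ x y : F, ⟪T x, y⟫ = ⟪x, T y⟫) :
    ‖T‖ = sSup {r : ℝ | ∃ x : F, ‖x‖ = 1 ∧ r = |⟪T x, x⟫|} := by
  set S := {r : ℝ | ∃ x : F, ‖x‖ = 1 ∧ r = |⟪T x, x⟫|} with hS
  obtain ⟨x₀, hx₀⟩ := exists_norm_eq F (zero_le_one (α := ℝ))
  have hSne : S.Nonempty := ⟨_, x₀, hx₀, rfl⟩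
  have hbdd : ∀ r ∈ S, r ≤ ‖T‖ := by
    rintro r ⟨x, hx, rfl⟩
    calc |⟪T x, x⟫| ≤ ‖T x‖ * ‖x‖ := abs_real_inner_le_norm _ _
      _ ≤ (‖T‖ * ‖x‖) * ‖x‖ := mul_le_mul_of_nonneg_right (T.le_opNorm x) (norm_nonneg x)
      _ = ‖T‖ := by rw [hx]; ring
  have hub : BddAbove S := ⟨‖T‖, fun r hr => hbdd r hr⟩
  set M := sSup S with hM
  have hM0 : 0 ≤ M := le_trans (abs_nonneg _) (le_csSup hub ⟨x₀, hx₀, rfl⟩)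
  have key : ∀ z : F, |⟪T z, z⟫| ≤ M * ‖z‖ ^ 2 := by
    intro z
    rcases eq_or_ne z 0 with rfl | hz
    · simp
    · have hzn : ‖z‖ ≠ 0 := norm_ne_zero_iff.mpr hz
      set u := ‖z‖⁻¹ • z with hu
      have hun : ‖u‖ = 1 := by
        rw [hu, norm_smul, norm_inv, norm_norm, inv_mul_cancel₀ hzn]
      have h1 : |⟪T u, u⟫| ≤ M := le_csSup hub ⟨u, hun, rfl⟩
      have h2 : ⟪T u, u⟫ = ‖z‖⁻¹ * (‖z‖⁻¹ * ⟪T z, z⟫) := by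
        rw [hu, _root_.map_smul, real_inner_smul_left, real_inner_smul_right]
      rw [h2] at h1
      rw [abs_mul, abs_mul, abs_inv, abs_norm] at h1
      have hzpos : 0 < ‖z‖ := lt_of_le_of_ne (norm_nonneg z) (Ne.symm hzn)
      calc |⟪T z, z⟫| = (‖z‖ * ‖z‖) * (‖z‖⁻¹ * (‖z‖⁻¹ * |⟪T z, z⟫|)) := by
            field_simp
        _ ≤ (‖z‖ * ‖z‖) * M := by
            apply mul_le_mul_of_nonneg_left h1 (by positivity)
        _ = M * ‖z‖ ^ 2 := by ring
  refine le_antisymm ?_ (csSup_le hSne hbdd)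
  refine ContinuousLinearMap.opNorm_le_of_unit_norm hM0 fun x hx => ?_
  rcases eq_or_ne (T x) 0 with h0 | h0
  · rw [h0]; simpa using hM0
  · have hTxn : ‖T x‖ ≠ 0 := norm_ne_zero_iff.mpr h0
    set y := ‖T x‖⁻¹ • T x with hy
    have hyn : ‖y‖ = 1 := by rw [hy, norm_smul, norm_inv, norm_norm, inv_mul_cancel₀ hTxn]
    have hTxy : ⟪T x, y⟫ = ‖T x‖ := by
      rw [hy, real_inner_smul_right, real_inner_self_eq_norm_mul_norm]
      field_simp
    have hsymm : ⟪T y, x⟫ = ⟪T x, y⟫ := by rw [hT y x, real_inner_comm]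
    have pol : 4 * ⟪T x, y⟫ = ⟪T (x + y), x + y⟫ - ⟪T (x - y), x - y⟫ := by
      rw [map_add, map_sub, inner_add_left, inner_add_right, inner_add_right,
        inner_sub_left, inner_sub_right, inner_sub_right, hsymm]
      ring
    have k1 := (abs_le.mp (key (x + y))).2
    have k2 := (abs_le.mp (key (x - y))).1
    have par : ‖x + y‖ ^ 2 + ‖x - y‖ ^ 2 = 4 := by
      have := parallelogram_law_with_norm ℝ x y
      rw [hx] at this; rw [hyn] at this
      nlinarith [this]
    have h4 : 4 * ‖T x‖ ≤ M * (‖x + y‖ ^ 2) + M * (‖x - y‖ ^ 2) := by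
      rw [← hTxy]; nlinarith [pol, k1, k2]
    calc ‖T x‖ = (4 * ‖T x‖) / 4 := by ring
      _ ≤ (M * (‖x + y‖ ^ 2) + M * (‖x - y‖ ^ 2)) / 4 := by linarith
      _ = M * ((‖x + y‖ ^ 2 + ‖x - y‖ ^ 2) / 4) := by ring
      _ = M := by rw [par]; ring

open scoped MatrixOrder in
lemma nucNorm_of_psd {D : Matrix ι ι ℝ} (hD : D.PosSemidef) : nucNorm D = D.trace := by
  have hH := (Matrix.posSemidef_conjTranspose_mul_self D).1
  have e : nucNorm D = (cfc Real.sqrt (Dᴴ * D)).trace := by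
    rw [hH.cfc_eq]; rfl
  have h0 : (0 : Matrix ι ι ℝ) ≤ D := by
    exact hD.nonneg
  have h1 : (0 : Matrix ι ι ℝ) ≤ D * D := by
    exact (hD.1 ▸ Matrix.posSemidef_conjTranspose_mul_self D).nonneg
  rw [e, hD.1, ← cfcₙ_eq_cfc, ← CFC.sqrt_eq_real_sqrt (D * D) h1, CFC.sqrt_mul_self D h0]

lemma matInner_factor (U : Matrix ι ι ℝ) (B : Matrix κ ι ℝ) :
    matInner U (Bᴴ * B) = ∑ z, (fun x => B z x) ⬝ᵥ U.mulVec (fun x => B z x) := by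
  unfold matInner
  have hL : ∀ x y, U x y * (Bᴴ * B) x y = ∑ z, U x y * (B z x * B z y) := fun x y => by
    simp [Matrix.mul_apply, Matrix.conjTranspose_apply, Finset.mul_sum]
  have hR : ∀ z, (fun x => B z x) ⬝ᵥ U.mulVec (fun x => B z x)
      = ∑ x, ∑ y, U x y * (B z x * B z y) := fun z => by
    simp only [Matrix.mulVec, dotProduct, Finset.mul_sum]
    exact Finset.sum_congr rfl fun x _ => Finset.sum_congr rfl fun y _ => by ring
  simp_rw [hL, hR]
  calc ∑ x, ∑ y, ∑ z, U x y * (B z x * B z y)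
      = ∑ x, ∑ z, ∑ y, U x y * (B z x * B z y) :=
        Finset.sum_congr rfl fun x _ => Finset.sum_comm
    _ = ∑ z, ∑ x, ∑ y, U x y * (B z x * B z y) := Finset.sum_comm

lemma trace_factor (B : Matrix κ ι ℝ) : (Bᴴ * B).trace = ∑ z, ∑ x, (B z x) ^ 2 := by
  rw [Matrix.trace]
  simp only [Matrix.diag_apply, Matrix.mul_apply, Matrix.conjTranspose_apply, star_trivial,
    ← pow_two]
  exact Finset.sum_comm

lemma duality (U : Matrix ι ι ℝ) (B : Matrix κ ι ℝ) :
    |matInner U (Bᴴ * B)| ≤ opNorm U * (Bᴴ * B).trace := by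
  rw [matInner_factor, trace_factor, Finset.mul_sum]
  calc |∑ z, (fun x => B z x) ⬝ᵥ U.mulVec (fun x => B z x)|
      ≤ ∑ z, |(fun x => B z x) ⬝ᵥ U.mulVec (fun x => B z x)| := Finset.abs_sum_le_sum_abs _ _
    _ ≤ ∑ z, opNorm U * ∑ x, (B z x) ^ 2 :=
        Finset.sum_le_sum fun z _ => quad_bound U (fun x => B z x)

lemma symm_dot (M : Matrix ι ι ℝ) (hM : Mᵀ = M) (v u : ι → ℝ) :
    M.mulVec v ⬝ᵥ u = M.mulVec u ⬝ᵥ v := by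
  rw [dotProduct_comm, Matrix.dotProduct_mulVec, ← Matrix.mulVec_transpose, hM]

end ChaosAux

section ChaosComb
variable {n m : ℕ}

/-- quadratic form of a Kronecker product of two rank-one matrices -/
lemma kron_quad (u v : Fin n → ℝ) (s t : Fin m → ℝ) (w : Fin n × Fin m → ℝ) :
    w ⬝ᵥ ((Matrix.vecMulVec u v ⊗ₖ Matrix.vecMulVec s t).mulVec w) =
      (∑ x, u x.1 * s x.2 * w x) * (∑ x, v x.1 * t x.2 * w x) := by
  rw [Finset.sum_mul_sum]
  simp only [Matrix.mulVec, dotProduct, Matrix.kroneckerMap_apply,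
    Matrix.vecMulVec_apply, Finset.mul_sum]
  refine Finset.sum_congr rfl fun x _ => Finset.sum_congr rfl fun y _ => by ring

/-- the vector appearing in the rank-one blocks of `D0` -/
noncomputable def av (c : Fin n → Fin n → ℝ) (d : Fin m → Fin m → ℝ)
    (w : Fin n × Fin m → ℝ) (k : Fin m) (i : Fin n) : ℝ :=
  ∑ x, c i x.1 * d k x.2 * w x

lemma D0_eq (c : Fin n → Fin n → ℝ) (d : Fin m → Fin m → ℝ) (w : Fin n × Fin m → ℝ) :
    D0 c d w = Matrix.blockDiagonal fun k => Matrix.vecMulVec (av c d w k) (av c d w k) := by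
  unfold D0
  refine congrArg Matrix.blockDiagonal (funext fun k => ?_)
  ext i j
  rw [Matrix.of_apply, kron_quad, Matrix.vecMulVec_apply, av, av]

lemma matInner_blockDiagonal (U V : Fin m → Matrix (Fin n) (Fin n) ℝ) :
    matInner (Matrix.blockDiagonal U) (Matrix.blockDiagonal V) =
      ∑ k, ∑ i, ∑ j, U k i j * V k i j := by
  unfold matInner
  rw [Fintype.sum_prod_type]
  rw [Finset.sum_comm]
  refine Finset.sum_congr rfl fun k _ => Finset.sum_congr rfl fun i _ => ?_
  rw [Fintype.sum_prod_type]
  simp [Matrix.blockDiagonal_apply, ite_mul, mul_ite, Finset.sum_ite_eq', eq_comm]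

noncomputable def qf {γ : Type*} [Fintype γ] (w : γ → ℝ) : Matrix γ γ ℝ →ₗ[ℝ] ℝ where
  toFun M := w ⬝ᵥ M.mulVec w
  map_add' A B := by beta_reduce; rw [Matrix.add_mulVec, dotProduct_add]
  map_smul' r A := by
    simp only [RingHom.id_apply, smul_eq_mul]
    rw [Matrix.smul_mulVec, dotProduct_smul, smul_eq_mul]

lemma vecMulVec_transp (u v : Fin n → ℝ) :
    (Matrix.vecMulVec u v)ᵀ = Matrix.vecMulVec v u := by
  ext i j; simp [Matrix.vecMulVec_apply, mul_comm]

variable (c : Fin n → Fin n → ℝ) (d : Fin m → Fin m → ℝ)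
    (Ut : Fin m → Matrix (Fin n) (Fin n) ℝ)

lemma bigM_eq (hdiag : ∀ k i, Ut k i i = 0) :
    (∑ k, (∑ i, ∑ j, (if i = j then 0 else Ut k i j) •
        Matrix.vecMulVec (c i) (c j)) ⊗ₖ Matrix.vecMulVec (d k) (d k)) =
    ∑ k, ∑ i, ∑ j, Ut k i j •
        (Matrix.vecMulVec (c i) (c j) ⊗ₖ Matrix.vecMulVec (d k) (d k)) := by
  refine Finset.sum_congr rfl fun k _ => ?_
  have hite : ∀ i j : Fin n, (if i = j then (0:ℝ) else Ut k i j) = Ut k i j := by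
    intro i j
    split
    · next h => rw [h, hdiag]
    · rfl
  simp_rw [hite]
  set W := Matrix.vecMulVec (d k) (d k)
  let kr : Matrix (Fin n) (Fin n) ℝ →+ Matrix (Fin n × Fin m) (Fin n × Fin m) ℝ :=
    AddMonoidHom.mk' (fun A => A ⊗ₖ W) (fun A B => Matrix.add_kronecker A B W)
  have hthis : ∀ A : Matrix (Fin n) (Fin n) ℝ, A ⊗ₖ W = kr A := fun _ => rfl
  rw [hthis, map_sum]
  refine Finset.sum_congr rfl fun i _ => ?_
  rw [map_sum]
  refine Finset.sum_congr rfl fun j _ => ?_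
  rw [← hthis, Matrix.smul_kronecker]

lemma bigM_symm (hsymm : ∀ k, (Ut k).IsSymm) :
    (∑ k, ∑ i, ∑ j, Ut k i j •
        (Matrix.vecMulVec (c i) (c j) ⊗ₖ Matrix.vecMulVec (d k) (d k)))ᵀ =
    ∑ k, ∑ i, ∑ j, Ut k i j •
        (Matrix.vecMulVec (c i) (c j) ⊗ₖ Matrix.vecMulVec (d k) (d k)) := by
  rw [Matrix.transpose_sum]
  refine Finset.sum_congr rfl fun k _ => ?_
  rw [Matrix.transpose_sum]
  calc ∑ i, (∑ j, Ut k i j •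
          (Matrix.vecMulVec (c i) (c j) ⊗ₖ Matrix.vecMulVec (d k) (d k)))ᵀ
      = ∑ i, ∑ j, Ut k i j •
          (Matrix.vecMulVec (c j) (c i) ⊗ₖ Matrix.vecMulVec (d k) (d k)) := by
        refine Finset.sum_congr rfl fun i _ => ?_
        rw [Matrix.transpose_sum]
        refine Finset.sum_congr rfl fun j _ => ?_
        rw [Matrix.transpose_smul, ← Matrix.kroneckerMap_transpose,
          vecMulVec_transp, vecMulVec_transp]
    _ = ∑ j, ∑ i, Ut k i j •
          (Matrix.vecMulVec (c j) (c i) ⊗ₖ Matrix.vecMulVec (d k) (d k)) := Finset.sum_comm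
    _ = ∑ i, ∑ j, Ut k i j •
          (Matrix.vecMulVec (c i) (c j) ⊗ₖ Matrix.vecMulVec (d k) (d k)) := by
        refine Finset.sum_congr rfl fun j _ => Finset.sum_congr rfl fun i _ => ?_
        rw [(hsymm k).apply j i]

lemma qf_bigM (w : Fin n × Fin m → ℝ) :
    qf w (∑ k, ∑ i, ∑ j, Ut k i j •
        (Matrix.vecMulVec (c i) (c j) ⊗ₖ Matrix.vecMulVec (d k) (d k))) =
    ∑ k, ∑ i, ∑ j, Ut k i j * (av c d w k i * av c d w k j) := by
  rw [map_sum]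
  refine Finset.sum_congr rfl fun k _ => ?_
  rw [map_sum]
  refine Finset.sum_congr rfl fun i _ => ?_
  rw [map_sum]
  refine Finset.sum_congr rfl fun j _ => ?_
  rw [_root_.map_smul, smul_eq_mul]
  congr 1
  show w ⬝ᵥ ((Matrix.vecMulVec (c i) (c j) ⊗ₖ Matrix.vecMulVec (d k) (d k)).mulVec w) = _
  rw [kron_quad]; rfl

lemma trace_D0 (w : Fin n × Fin m → ℝ) :
    (D0 c d w).trace = ∑ k, ∑ i, (av c d w k i) ^ 2 := by
  rw [D0_eq, Matrix.trace_blockDiagonal]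
  refine Finset.sum_congr rfl fun k _ => ?_
  simp [Matrix.trace, Matrix.diag_apply, Matrix.vecMulVec_apply, pow_two]

lemma D0_factor (hn : 0 < n) (w : Fin n × Fin m → ℝ) :
    D0 c d w =
      (Matrix.blockDiagonal fun k => Matrix.of fun i j : Fin n =>
        if i = (⟨0, hn⟩ : Fin n) then av c d w k j else 0)ᴴ *
      (Matrix.blockDiagonal fun k => Matrix.of fun i j : Fin n =>
        if i = (⟨0, hn⟩ : Fin n) then av c d w k j else 0) := by
  rw [D0_eq, Matrix.blockDiagonal_conjTranspose, ← Matrix.blockDiagonal_mul]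
  refine congrArg Matrix.blockDiagonal (funext fun k => ?_)
  ext i j
  simp [Matrix.mul_apply, Matrix.conjTranspose_apply, Matrix.vecMulVec_apply,
    ite_mul, mul_ite, Finset.sum_ite_eq', mul_comm]

end ChaosComb

open scoped RealInnerProductSpace

theorem chaos_operator_norm
    (n m : ℕ) (hn : 0 < n) (hm : 0 < m)
    (c : Fin n → Fin n → ℝ) (d : Fin m → Fin m → ℝ)
    (Ut : Fin m → Matrix (Fin n) (Fin n) ℝ)
    (hsymm : ∀ k, (Ut k).IsSymm)
    (hdiag : ∀ k i, Ut k i i = 0) :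
    opNorm (∑ k, (∑ i, ∑ j, (if i = j then 0 else Ut k i j) •
        Matrix.vecMulVec (c i) (c j)) ⊗ₖ Matrix.vecMulVec (d k) (d k)) =
      sSup {x : ℝ | ∃ w : Fin n × Fin m → ℝ, e2 w = 1 ∧
        x = |matInner (Matrix.blockDiagonal Ut) (D0 c d w)|} ∧
    sSup {x : ℝ | ∃ w : Fin n × Fin m → ℝ, e2 w = 1 ∧
        x = |matInner (Matrix.blockDiagonal Ut) (D0 c d w)|} ≤
      opNorm (Matrix.blockDiagonal Ut) *
        sSup {x : ℝ | ∃ w : Fin n × Fin m → ℝ, e2 w = 1 ∧ x = nucNorm (D0 c d w)} := by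
  classical
  have hne : Nonempty (Fin n × Fin m) := ⟨(⟨0, hn⟩, ⟨0, hm⟩)⟩
  rw [bigM_eq c d Ut hdiag]
  set M2 := ∑ k, ∑ i, ∑ j, Ut k i j •
      (Matrix.vecMulVec (c i) (c j) ⊗ₖ Matrix.vecMulVec (d k) (d k)) with hM2
  have hkey : ∀ w : Fin n × Fin m → ℝ,
      matInner (Matrix.blockDiagonal Ut) (D0 c d w) = w ⬝ᵥ M2.mulVec w := by
    intro w
    rw [D0_eq, matInner_blockDiagonal]
    have h2 : w ⬝ᵥ M2.mulVec w = qf w M2 := rfl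
    rw [h2, hM2, qf_bigM]
    simp_rw [Matrix.vecMulVec_apply]
  -- nonempty unit vector
  have hw0 : e2 (fun x : Fin n × Fin m => if x = (⟨0, hn⟩, ⟨0, hm⟩) then (1:ℝ) else 0) = 1 := by
    rw [e2]
    rw [show (∑ x : Fin n × Fin m,
        (if x = ((⟨0, hn⟩ : Fin n), (⟨0, hm⟩ : Fin m)) then (1:ℝ) else 0) ^ 2) = 1 by
      simp [ite_pow, Finset.sum_ite_eq']]
    exact Real.sqrt_one
  constructor
  · -- part 1
    haveI : Nontrivial (EuclideanSpace ℝ (Fin n × Fin m)) := inferInstance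
    have hTsa : ∀ x y : EuclideanSpace ℝ (Fin n × Fin m),
        ⟪Matrix.toEuclideanCLM (𝕜 := ℝ) M2 x, y⟫ = ⟪x, Matrix.toEuclideanCLM (𝕜 := ℝ) M2 y⟫ := by
      intro x y
      obtain ⟨v, rfl⟩ : ∃ v, (WithLp.equiv 2 (Fin n × Fin m → ℝ)).symm v = x :=
        ⟨WithLp.equiv 2 _ x, (WithLp.equiv 2 _).symm_apply_apply x⟩
      obtain ⟨u, rfl⟩ : ∃ u, (WithLp.equiv 2 (Fin n × Fin m → ℝ)).symm u = y :=
        ⟨WithLp.equiv 2 _ y, (WithLp.equiv 2 _).symm_apply_apply y⟩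
      rw [inner_symm_dot, real_inner_comm, inner_symm_dot]
      exact symm_dot M2 (bigM_symm c d Ut hsymm) v u
    rw [opNorm_eq, sa_norm_eq_sSup _ hTsa]
    congr 1
    ext r
    constructor
    · rintro ⟨x, hx, rfl⟩
      refine ⟨WithLp.equiv 2 _ x, ?_, ?_⟩
      · rw [e2_eq_norm, (WithLp.equiv 2 _).symm_apply_apply]; exact hx
      · rw [hkey]
        congr 1
    · rintro ⟨w, hw, rfl⟩
      refine ⟨(WithLp.equiv 2 (Fin n × Fin m → ℝ)).symm w, by rw [← e2_eq_norm]; exact hw, ?_⟩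
      rw [hkey, inner_symm_dot, dotProduct_comm]
  · -- part 2
    have hdual : ∀ w : Fin n × Fin m → ℝ,
        |matInner (Matrix.blockDiagonal Ut) (D0 c d w)| ≤
          opNorm (Matrix.blockDiagonal Ut) * nucNorm (D0 c d w) := by
      intro w
      have hfac := D0_factor c d hn w
      have hpsd : (D0 c d w).PosSemidef := by
        rw [hfac]; exact Matrix.posSemidef_conjTranspose_mul_self _
      rw [nucNorm_of_psd hpsd]
      have h := duality (Matrix.blockDiagonal Ut)
        (Matrix.blockDiagonal fun k => Matrix.of fun i j : Fin n =>
          if i = (⟨0, hn⟩ : Fin n) then av c d w k j else 0)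
      rw [← hfac] at h
      exact h
    have hS2bdd : BddAbove {x : ℝ | ∃ w : Fin n × Fin m → ℝ, e2 w = 1 ∧
        x = nucNorm (D0 c d w)} := by
      refine ⟨∑ k, ∑ i, ∑ x : Fin n × Fin m, (c i x.1 * d k x.2) ^ 2, ?_⟩
      rintro r ⟨w, hw, rfl⟩
      have hfac := D0_factor c d hn w
      have hpsd : (D0 c d w).PosSemidef := by
        rw [hfac]; exact Matrix.posSemidef_conjTranspose_mul_self _
      rw [nucNorm_of_psd hpsd, trace_D0]
      refine Finset.sum_le_sum fun k _ => Finset.sum_le_sum fun i _ => ?_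
      have h1 : (av c d w k i) ^ 2 ≤
          (∑ x : Fin n × Fin m, (c i x.1 * d k x.2) ^ 2) * ∑ x, w x ^ 2 :=
        Finset.sum_mul_sq_le_sq_mul_sq _ _ _
      rw [sum_sq_eq_one_of_e2 hw, mul_one] at h1
      exact h1
    refine csSup_le ⟨_, _, hw0, rfl⟩ ?_
    rintro r ⟨w, hw, rfl⟩
    calc |matInner (Matrix.blockDiagonal Ut) (D0 c d w)|
        ≤ opNorm (Matrix.blockDiagonal Ut) * nucNorm (D0 c d w) := hdual w
      _ ≤ opNorm (Matrix.blockDiagonal Ut) * sSup {x : ℝ | ∃ w : Fin n × Fin m → ℝ,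
            e2 w = 1 ∧ x = nucNorm (D0 c d w)} :=
          mul_le_mul_of_nonneg_left (le_csSup hS2bdd ⟨w, hw, rfl⟩)
            (opNorm_nonneg' _)
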